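/- For every odd integer k ≥ 3 there exists a finite simple graph with maximum degree 2 on exactly 2k − 2 vertices that is not k-feasible (namely (k−1)/2 disjoint copies of the path P₄ on four vertices); and for every even integer k ≥ 4 there exists a finite simple graph with maximum degree 2 on exactly 2k − 3 vertices that is not k-feasible (namely (k−2)/2 disjoint copies of P₄ together with one isolated vertex). -/

import Mathlib

open Finset

variable {V : Type*}

open scoped Classical in
/-- Degree of `v` in the subgraph of `G` induced on the vertex set `A`
(number of neighbours of `v` inside `A`). -/
noncomputable def degOn (G : SimpleGraph V) (A : Finset V) (v : V) : ℕ :=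
  (A.filter fun w => G.Adj v w).card

/-- Maximum degree of the subgraph of `G` induced on `A`. -/
noncomputable def maxDegOn (G : SimpleGraph V) (A : Finset V) : ℕ :=
  A.sup (degOn G A)

open scoped Classical in
/-- The subgraph of `G` induced on `A` has fewer than `k` vertices or at least `k`
vertices realising its maximum degree. -/
def equates (G : SimpleGraph V) (k : ℕ) (A : Finset V) : Prop :=
  A.card < k ∨ k ≤ (A.filter fun v => degOn G A v = maxDegOn G A).card

open scoped Classical in
/-- `f_k` of the subgraph of `G` induced on `A`: the minimum number of vertices of `A`
whose deletion leaves an induced subgraph with fewer than `k` vertices or with at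
least `k` vertices realising its maximum degree. -/
noncomputable def fkOn (G : SimpleGraph V) (k : ℕ) (A : Finset V) : ℕ :=
  sInf {m | ∃ S, S ⊆ A ∧ S.card = m ∧ equates G k (A \ S)}

/-- `f_k(G)`. -/
noncomputable def fk [Fintype V] (G : SimpleGraph V) (k : ℕ) : ℕ :=
  fkOn G k Finset.univ

/-- `diff` of the subgraph of `G` induced on `A`: the largest degree minus the
second-largest degree (with multiplicity) of this subgraph. -/
noncomputable def diffOn (G : SimpleGraph V) (A : Finset V) : ℕ :=
  maxDegOn G A - ((A.val.map (degOn G A)).erase (maxDegOn G A)).sup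

/-- `diff(G) = d₁ - d₂`, the difference between the largest and second-largest
vertex degrees of `G`. -/
noncomputable def diffDeg [Fintype V] (G : SimpleGraph V) : ℕ :=
  diffOn G Finset.univ

open scoped Classical in
/-- `G` is `k`-feasible: some induced subgraph `H` of `G` has at least `k` vertices
whose degree in `H` equals the maximum degree of `H`. -/
def kFeasible (G : SimpleGraph V) (k : ℕ) : Prop :=
  ∃ A : Finset V, k ≤ (A.filter fun v => degOn G A v = maxDegOn G A).card

/-- `m` disjoint copies of the path `P₄` on four vertices. -/
def pathFours (m : ℕ) : SimpleGraph (Fin m × Fin 4) :=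
  SimpleGraph.fromRel fun x y => x.1 = y.1 ∧ (y.2 : ℕ) = (x.2 : ℕ) + 1

/-- `m` disjoint copies of the path `P₄` together with one isolated vertex (`none`). -/
def pathFoursPlusOne (m : ℕ) : SimpleGraph (Option (Fin m × Fin 4)) :=
  SimpleGraph.fromRel fun x y =>
    ∃ a b, x = some a ∧ y = some b ∧ a.1 = b.1 ∧ (b.2 : ℕ) = (a.2 : ℕ) + 1

section Aux
open scoped Classical

/-! ### The path `P₄` on `Fin 4` -/

private def p4 : SimpleGraph (Fin 4) := SimpleGraph.fromRel fun a b => (b : ℕ) = (a : ℕ) + 1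

private lemma p4_adj (a b : Fin 4) :
    p4.Adj a b ↔ a ≠ b ∧ ((b:ℕ) = (a:ℕ) + 1 ∨ (a:ℕ) = (b:ℕ) + 1) := by
  simp [p4, SimpleGraph.fromRel_adj]

private def degC (S : Finset (Fin 4)) (a : Fin 4) : ℕ :=
  (S.filter fun b => a ≠ b ∧ ((b:ℕ) = (a:ℕ)+1 ∨ (a:ℕ) = (b:ℕ)+1)).card

private lemma degOn_p4_eq (S : Finset (Fin 4)) (a : Fin 4) : degOn p4 S a = degC S a := by
  unfold degOn degC
  congr 1
  ext b
  simp only [Finset.mem_filter, p4_adj]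

private lemma p4_count (S : Finset (Fin 4)) (d : ℕ) :
    (S.filter fun a => degOn p4 S a = d).card ≤ 2 := by
  have hrw : (S.filter fun a => degOn p4 S a = d) = (S.filter fun a => degC S a = d) := by
    ext a; simp [degOn_p4_eq]
  rw [hrw]
  by_cases hd : d < 5
  · have key : ∀ S : Finset (Fin 4), ∀ d : Fin 5,
        (S.filter fun a => degC S a = (d:ℕ)).card ≤ 2 := by decide
    have := key S ⟨d, hd⟩
    simpa using this
  · have : (S.filter fun a => degC S a = d) = ∅ := by
      apply Finset.filter_eq_empty_iff.2
      intro a _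
      have h1 : degC S a ≤ 4 :=
        le_trans (Finset.card_filter_le _ _) (le_trans (Finset.card_le_univ S) (by simp))
      omega
    simp [this]

private lemma degC_univ_le : ∀ a : Fin 4, degC (Finset.univ : Finset (Fin 4)) a ≤ 2 := by decide

private lemma degC_univ_one : degC (Finset.univ : Finset (Fin 4)) 1 = 2 := by decide

/-! ### Transport to `pathFours m` -/

private lemma pf_adj {m : ℕ} (x y : Fin m × Fin 4) :
    (pathFours m).Adj x y ↔ x.1 = y.1 ∧ p4.Adj x.2 y.2 := by
  obtain ⟨i, a⟩ := x; obtain ⟨j, b⟩ := y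
  simp only [pathFours, SimpleGraph.fromRel_adj, p4_adj, ne_eq, Prod.mk.injEq, not_and]
  constructor
  · rintro ⟨h1, h2 | h2⟩
    · exact ⟨h2.1, fun hab => (h1 h2.1 hab).elim, Or.inl h2.2⟩
    · exact ⟨h2.1.symm, fun hab => (h1 h2.1.symm hab).elim, Or.inr h2.2⟩
  · rintro ⟨hij, hab, h | h⟩
    · exact ⟨fun _ h' => hab h', Or.inl ⟨hij, h⟩⟩
    · exact ⟨fun _ h' => hab h', Or.inr ⟨hij.symm, h⟩⟩

private lemma degOn_pf {m : ℕ} (A : Finset (Fin m × Fin 4)) (i : Fin m) (a : Fin 4) :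
    degOn (pathFours m) A (i, a)
      = degOn p4 ((A.filter fun v => v.1 = i).image Prod.snd) a := by
  unfold degOn
  have h : (A.filter fun w => (pathFours m).Adj (i, a) w)
      = ((((A.filter fun v => v.1 = i).image Prod.snd)).filter fun b => p4.Adj a b).image
          (fun b => (i, b)) := by
    ext ⟨j, b⟩
    simp only [Finset.mem_filter, Finset.mem_image, pf_adj, Prod.mk.injEq]
    constructor
    · rintro ⟨hA, hij, hadj⟩
      exact ⟨b, ⟨⟨(j, b), ⟨hA, hij.symm⟩, rfl⟩, hadj⟩, hij, rfl⟩
    · rintro ⟨c, ⟨⟨⟨j', b'⟩, ⟨hA, hj'⟩, hb'⟩, hadj⟩, hi, hb⟩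
      subst hb; subst hi
      simp only at hb' hj'
      subst hb'; subst hj'
      exact ⟨hA, rfl, hadj⟩
  rw [h, Finset.card_image_of_injective _ (fun x y hxy => by simpa using hxy)]

private lemma pf_count {m : ℕ} (A : Finset (Fin m × Fin 4)) (d : ℕ) :
    (A.filter fun v => degOn (pathFours m) A v = d).card ≤ 2 * m := by
  rw [Finset.card_eq_sum_card_fiberwise
      (f := Prod.fst) (t := Finset.univ) (fun x _ => Finset.mem_univ _)]
  have hle : ∀ i : Fin m,
      ((A.filter fun v => degOn (pathFours m) A v = d).filter fun v => v.1 = i).card ≤ 2 := by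
    intro i
    have hmap : ((A.filter fun v => degOn (pathFours m) A v = d).filter fun v => v.1 = i).card
        ≤ (((A.filter fun v => v.1 = i).image Prod.snd).filter
            fun a => degOn p4 ((A.filter fun v => v.1 = i).image Prod.snd) a = d).card := by
      apply Finset.card_le_card_of_injOn Prod.snd
      · rintro ⟨j, b⟩ hv
        obtain ⟨hm1, hj⟩ := Finset.mem_filter.1 hv
        obtain ⟨hA, hdeg⟩ := Finset.mem_filter.1 hm1
        have hj' : j = i := hj
        apply Finset.mem_filter.2
        refine ⟨Finset.mem_image.2 ⟨(j, b), Finset.mem_filter.2 ⟨hA, hj⟩, rfl⟩, ?_⟩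
        show degOn p4 ((A.filter fun v => v.1 = i).image Prod.snd) b = d
        rw [← degOn_pf]
        exact hj' ▸ hdeg
      · intro u hu v hv h
        obtain ⟨_, hu1⟩ := Finset.mem_filter.1 hu
        obtain ⟨_, hv1⟩ := Finset.mem_filter.1 hv
        have hu1' : u.1 = i := hu1
        have hv1' : v.1 = i := hv1
        exact Prod.ext_iff.2 ⟨by rw [hu1', hv1'], h⟩
    exact le_trans hmap (p4_count _ d)
  calc (∑ i : Fin m,
      ((A.filter fun v => degOn (pathFours m) A v = d).filter fun v => v.1 = i).card)
      ≤ ∑ _i : Fin m, 2 := Finset.sum_le_sum fun i _ => hle i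
    _ = 2 * m := by simp [mul_comm]

private lemma pf_filter_univ {m : ℕ} (i : Fin m) :
    (((Finset.univ : Finset (Fin m × Fin 4)).filter fun v => v.1 = i).image Prod.snd)
      = Finset.univ := by
  ext b
  simp only [Finset.mem_univ, iff_true, Finset.mem_image, Finset.mem_filter]
  exact ⟨(i, b), ⟨trivial, rfl⟩, rfl⟩

private lemma pf_degOn_univ_le {m : ℕ} (v : Fin m × Fin 4) :
    degOn (pathFours m) Finset.univ v ≤ 2 := by
  obtain ⟨i, a⟩ := v
  rw [degOn_pf, pf_filter_univ, degOn_p4_eq]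
  exact degC_univ_le a

private lemma pf_maxDegOn {m : ℕ} (hm : 0 < m) :
    maxDegOn (pathFours m) Finset.univ = 2 := by
  apply le_antisymm
  · exact Finset.sup_le fun v _ => pf_degOn_univ_le v
  · have h2 : degOn (pathFours m) Finset.univ (⟨0, hm⟩, 1) = 2 := by
      rw [degOn_pf, pf_filter_univ, degOn_p4_eq, degC_univ_one]
    calc (2:ℕ) = degOn (pathFours m) Finset.univ (⟨0, hm⟩, 1) := h2.symm
      _ ≤ maxDegOn (pathFours m) Finset.univ := Finset.le_sup (Finset.mem_univ _)

/-! ### The graph with an extra isolated vertex -/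

private lemma pfo_adj_none {m : ℕ} (x : Option (Fin m × Fin 4)) :
    ¬ (pathFoursPlusOne m).Adj none x := by
  simp [pathFoursPlusOne, SimpleGraph.fromRel_adj]

private lemma pfo_adj_some {m : ℕ} (u v : Fin m × Fin 4) :
    (pathFoursPlusOne m).Adj (some u) (some v) ↔ (pathFours m).Adj u v := by
  simp only [pathFoursPlusOne, pathFours, SimpleGraph.fromRel_adj, ne_eq, Option.some.injEq]
  constructor
  · rintro ⟨hne, h | h⟩
    · obtain ⟨a, b, ha, hb, h1, h2⟩ := h
      exact ⟨fun hh => hne (by rw [hh]), Or.inl (by subst ha; subst hb; exact ⟨h1, h2⟩)⟩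
    · obtain ⟨a, b, ha, hb, h1, h2⟩ := h
      exact ⟨fun hh => hne (by rw [hh]), Or.inr (by subst ha; subst hb; exact ⟨h1, h2⟩)⟩
  · rintro ⟨hne, h | h⟩
    · exact ⟨hne, Or.inl ⟨u, v, rfl, rfl, h.1, h.2⟩⟩
    · exact ⟨hne, Or.inr ⟨v, u, rfl, rfl, h.1, h.2⟩⟩

private lemma pfo_degOn_none {m : ℕ} (A : Finset (Option (Fin m × Fin 4))) :
    degOn (pathFoursPlusOne m) A none = 0 := by
  unfold degOn
  rw [Finset.card_eq_zero]
  apply Finset.filter_eq_empty_iff.2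
  intro x _
  exact pfo_adj_none x

private lemma pfo_degOn_some {m : ℕ} (A : Finset (Option (Fin m × Fin 4))) (v : Fin m × Fin 4) :
    degOn (pathFoursPlusOne m) A (some v)
      = degOn (pathFours m) (Finset.univ.filter fun u => some u ∈ A) v := by
  unfold degOn
  have h : (A.filter fun w => (pathFoursPlusOne m).Adj (some v) w)
      = ((Finset.univ.filter fun u => some u ∈ A).filter fun u => (pathFours m).Adj v u).image
          some := by
    ext x
    cases x with
    | none =>
      simp only [Finset.mem_filter, Finset.mem_image]
      constructor
      · rintro ⟨_, h⟩
        exact absurd (h.symm) (pfo_adj_none _)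
      · rintro ⟨u, _, h⟩; exact absurd h (by simp)
    | some u =>
      simp only [Finset.mem_filter, Finset.mem_image, Finset.mem_univ, true_and,
        Option.some.injEq, pfo_adj_some]
      constructor
      · rintro ⟨hA, hadj⟩; exact ⟨u, ⟨hA, hadj⟩, rfl⟩
      · rintro ⟨u', ⟨hA, hadj⟩, hu⟩; subst hu; exact ⟨hA, hadj⟩
  rw [h, Finset.card_image_of_injective _ (Option.some_injective _)]

private lemma pfo_count {m : ℕ} (A : Finset (Option (Fin m × Fin 4))) (d : ℕ) :
    (A.filter fun v => degOn (pathFoursPlusOne m) A v = d).card ≤ 2 * m + 1 := by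
  set A' : Finset (Fin m × Fin 4) := Finset.univ.filter fun u => some u ∈ A with hA'
  have hsub : (A.filter fun v => degOn (pathFoursPlusOne m) A v = d)
      ⊆ insert none ((A'.filter fun u => degOn (pathFours m) A' u = d).image some) := by
    intro x hx
    obtain ⟨hxA, hxd⟩ := Finset.mem_filter.1 hx
    cases x with
    | none => exact Finset.mem_insert_self _ _
    | some u =>
      apply Finset.mem_insert_of_mem
      apply Finset.mem_image.2
      refine ⟨u, Finset.mem_filter.2 ⟨?_, ?_⟩, rfl⟩
      · exact Finset.mem_filter.2 ⟨Finset.mem_univ _, hxA⟩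
      · rw [← pfo_degOn_some]; exact hxd
  calc (A.filter fun v => degOn (pathFoursPlusOne m) A v = d).card
      ≤ _ := Finset.card_le_card hsub
    _ ≤ ((A'.filter fun u => degOn (pathFours m) A' u = d).image some).card + 1 :=
        Finset.card_insert_le _ _
    _ ≤ (A'.filter fun u => degOn (pathFours m) A' u = d).card + 1 :=
        Nat.add_le_add_right (Finset.card_image_le) 1
    _ ≤ 2 * m + 1 := Nat.add_le_add_right (pf_count A' d) 1

private lemma pfo_maxDegOn {m : ℕ} (hm : 0 < m) :
    maxDegOn (pathFoursPlusOne m) Finset.univ = 2 := by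
  apply le_antisymm
  · apply Finset.sup_le
    intro v _
    cases v with
    | none => simp [pfo_degOn_none]
    | some u =>
      rw [pfo_degOn_some]
      calc degOn (pathFours m) (Finset.univ.filter fun u => some u ∈ (Finset.univ : Finset (Option (Fin m × Fin 4)))) u
          = degOn (pathFours m) Finset.univ u := by
            congr 1
            ext w; simp
        _ ≤ 2 := pf_degOn_univ_le u
  · have h2 : degOn (pathFoursPlusOne m) Finset.univ (some (⟨0, hm⟩, 1)) = 2 := by
      rw [pfo_degOn_some]
      have : (Finset.univ.filter fun u : Fin m × Fin 4 =>
          some u ∈ (Finset.univ : Finset (Option (Fin m × Fin 4)))) = Finset.univ := by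
        ext w; simp
      rw [this, degOn_pf, pf_filter_univ, degOn_p4_eq, degC_univ_one]
    calc (2:ℕ) = _ := h2.symm
      _ ≤ maxDegOn (pathFoursPlusOne m) Finset.univ := Finset.le_sup (Finset.mem_univ _)

end Aux

/-- For every odd `k ≥ 3`, the graph `((k-1)/2) · P₄` has maximum
degree `2`, exactly `2k - 2` vertices, and is not `k`-feasible; for every even `k ≥ 4`,
the graph `((k-2)/2) · P₄ ∪ K₁` has maximum degree `2`, exactly `2k - 3` vertices, and
is not `k`-feasible. -/
theorem stmt19 :
    (∀ (k : ℕ), 3 ≤ k → Odd k →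
      maxDegOn (pathFours ((k - 1) / 2)) Finset.univ = 2 ∧
      Fintype.card (Fin ((k - 1) / 2) × Fin 4) = 2 * k - 2 ∧
      ¬ kFeasible (pathFours ((k - 1) / 2)) k) ∧
    (∀ (k : ℕ), 4 ≤ k → Even k →
      maxDegOn (pathFoursPlusOne ((k - 2) / 2)) Finset.univ = 2 ∧
      Fintype.card (Option (Fin ((k - 2) / 2) × Fin 4)) = 2 * k - 3 ∧
      ¬ kFeasible (pathFoursPlusOne ((k - 2) / 2)) k) := by
  constructor
  · intro k hk hodd
    obtain ⟨t, ht⟩ := hodd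
    refine ⟨pf_maxDegOn (by omega), ?_, ?_⟩
    · simp only [Fintype.card_prod, Fintype.card_fin]
      omega
    · intro h
      unfold kFeasible at h
      obtain ⟨A, hA⟩ := h
      have hc := pf_count A (maxDegOn (pathFours ((k - 1) / 2)) A)
      have : k ≤ 2 * ((k - 1) / 2) := le_trans hA hc
      omega
  · intro k hk heven
    obtain ⟨t, ht⟩ := heven
    refine ⟨pfo_maxDegOn (by omega), ?_, ?_⟩
    · simp only [Fintype.card_option, Fintype.card_prod, Fintype.card_fin]
      omega
    · intro h
      unfold kFeasible at h
      obtain ⟨A, hA⟩ := h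
      have hc := pfo_count A (maxDegOn (pathFoursPlusOne ((k - 2) / 2)) A)
      have : k ≤ 2 * ((k - 2) / 2) + 1 := le_trans hA hc
      omega
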